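/- For every real primitive (1,1)-form α on ℂ⁴ and every (2,0)-form c with |c| = 2√2 (e.g. c = dz₁₂ + dz₃₄), setting β = −α² and defining k by β ∧ ω² = 24k vol, one has (β − 3k ω²) ∧ c ∧ c̄ ≤ 0. -/

import Mathlib

/- STATEMENT 13: for every real primitive (1,1)-form α on ℂ⁴ and c = dz₁₂ + dz₃₄
   (the representative, via SU(4)-transitivity, of the (2,0)-forms with |c| = 2√2),
   setting β = −α² and defining k by β ∧ ω² = 24k vol, one has
   (β − 3k ω²) ∧ c ∧ c̄ ≤ 0, i.e. (β − 3k ω²) ∧ c ∧ c̄ = r · vol with r ≤ 0. -/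

noncomputable section

open ExteriorAlgebra

/-- The complexified exterior algebra of ℝ⁸. -/
abbrev Lam : Type := ExteriorAlgebra ℂ (Fin 8 → ℂ)

/-- The 1-form dx_{i+1} (0-indexed). -/
def dx (i : Fin 8) : Lam := ExteriorAlgebra.ι ℂ (Pi.single i 1)

/-- The standard volume form vol = dx₁₂₃₄₅₆₇₈. -/
def vol : Lam := dx 0 * dx 1 * dx 2 * dx 3 * dx 4 * dx 5 * dx 6 * dx 7

/-- The complex 1-form dz_{j+1} = dx_{2j+1} + i dx_{2j+2} (0-indexed). -/
def dz (j : Fin 4) : Lam :=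
  dx ⟨2 * (j : ℕ), by omega⟩ + Complex.I • dx ⟨2 * (j : ℕ) + 1, by omega⟩

/-- The conjugate complex 1-form dz̄_{j+1}. -/
def dzbar (j : Fin 4) : Lam :=
  dx ⟨2 * (j : ℕ), by omega⟩ - Complex.I • dx ⟨2 * (j : ℕ) + 1, by omega⟩

/-- The standard Kähler form ω = dx₁₂ + dx₃₄ + dx₅₆ + dx₇₈. -/
def omega : Lam := dx 0 * dx 1 + dx 2 * dx 3 + dx 4 * dx 5 + dx 6 * dx 7

/-- The holomorphic volume form θ = dz₁ ∧ dz₂ ∧ dz₃ ∧ dz₄. -/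
def theta : Lam := dz 0 * dz 1 * dz 2 * dz 3

/-- The conjugate θ̄ = dz̄₁ ∧ dz̄₂ ∧ dz̄₃ ∧ dz̄₄. -/
def thetabar : Lam := dzbar 0 * dzbar 1 * dzbar 2 * dzbar 3

/-- The standard Kähler form ω = (i/2) Σ_j dz_j ∧ dz̄_j. -/
def omegaK : Lam := (Complex.I / 2) • (∑ j : Fin 4, dz j * dzbar j)

/-- c = dz₁₂ + dz₃₄ and its conjugate. -/
def cform : Lam := dz 0 * dz 1 + dz 2 * dz 3
def cformbar : Lam := dzbar 0 * dzbar 1 + dzbar 2 * dzbar 3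

def gv (i : Fin 8) : Fin 8 → ℂ :=
  @Pi.single (Fin 8) (fun _ => ℂ) _ _ (⟨2 * ((i : ℕ) / 2), by omega⟩ : Fin 8) 1 +
    (if (i : ℕ) % 2 = 0 then Complex.I else -Complex.I) •
      @Pi.single (Fin 8) (fun _ => ℂ) _ _ (⟨2 * ((i : ℕ) / 2) + 1, by omega⟩ : Fin 8) 1
def g (i : Fin 8) : Lam := ExteriorAlgebra.ι ℂ (gv i)

lemma dz_g (j : Fin 4) : dz j = g ⟨2 * (j : ℕ), by omega⟩ := by
  simp [dz, g, gv, dx, map_add, map_smul, Nat.mul_div_cancel_left]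
lemma dzbar_g (j : Fin 4) : dzbar j = g ⟨2 * (j : ℕ) + 1, by omega⟩ := by
  simp [dzbar, g, gv, dx, map_add, map_smul, Nat.mul_add_div, Nat.mul_add_mod, sub_eq_add_neg, neg_smul, smul_neg]

lemma dz0 : dz 0 = g 0 := dz_g 0
lemma dz1 : dz 1 = g 2 := dz_g 1
lemma dz2 : dz 2 = g 4 := dz_g 2
lemma dz3 : dz 3 = g 6 := dz_g 3
lemma dzb0 : dzbar 0 = g 1 := dzbar_g 0
lemma dzb1 : dzbar 1 = g 3 := dzbar_g 1
lemma dzb2 : dzbar 2 = g 5 := dzbar_g 2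
lemma dzb3 : dzbar 3 = g 7 := dzbar_g 3

lemma g_anticomm (i j : Fin 8) : g i * g j = -(g j * g i) :=
  eq_neg_of_add_eq_zero_left (ExteriorAlgebra.ι_add_mul_swap _ _)

@[simp] lemma g_sq (i : Fin 8) : g i * g i = 0 := ExteriorAlgebra.ι_sq_zero _
@[simp] lemma g_sq' (i : Fin 8) (x : Lam) : g i * (g i * x) = 0 := by
  rw [← mul_assoc, g_sq, zero_mul]
@[simp] lemma g_swap (i j : Fin 8) (h : j < i) : g i * g j = -(g j * g i) := g_anticomm i j
@[simp] lemma g_swap' (i j : Fin 8) (x : Lam) (h : j < i) :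
    g i * (g j * x) = -(g j * (g i * x)) := by
  rw [← mul_assoc, g_anticomm i j, neg_mul, mul_assoc]

-- dx level
lemma dx_anticomm (i j : Fin 8) : dx i * dx j = -(dx j * dx i) :=
  eq_neg_of_add_eq_zero_left (ExteriorAlgebra.ι_add_mul_swap _ _)
@[simp] lemma dx_sq (i : Fin 8) : dx i * dx i = 0 := ExteriorAlgebra.ι_sq_zero _
@[simp] lemma dx_sq' (i : Fin 8) (x : Lam) : dx i * (dx i * x) = 0 := by
  rw [← mul_assoc, dx_sq, zero_mul]
@[simp] lemma dx_swap (i j : Fin 8) (h : j < i) : dx i * dx j = -(dx j * dx i) := dx_anticomm i j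
@[simp] lemma dx_swap' (i j : Fin 8) (x : Lam) (h : j < i) :
    dx i * (dx j * x) = -(dx j * (dx i * x)) := by
  rw [← mul_assoc, dx_anticomm i j, neg_mul, mul_assoc]

lemma gpair0 (x : Lam) : g 0 * (g 1 * x) = (-(2:ℂ) * Complex.I) • (dx 0 * (dx 1 * x)) := by
  have h0 : g 0 = dx 0 + Complex.I • dx 1 := by rw [← dz0]; rfl
  have h1 : g 1 = dx 0 - Complex.I • dx 1 := by rw [← dzb0]; rfl
  rw [h0, h1]
  simp (config := { decide := true }) [mul_add, add_mul, mul_sub, sub_mul, smul_mul_assoc,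
    mul_smul_comm, smul_smul, smul_sub, smul_add, mul_assoc, Complex.I_mul_I, sub_eq_add_neg,
    neg_smul, smul_neg]
  module

lemma gpair1 (x : Lam) : g 2 * (g 3 * x) = (-(2:ℂ) * Complex.I) • (dx 2 * (dx 3 * x)) := by
  have h0 : g 2 = dx 2 + Complex.I • dx 3 := by rw [← dz1]; rfl
  have h1 : g 3 = dx 2 - Complex.I • dx 3 := by rw [← dzb1]; rfl
  rw [h0, h1]
  simp (config := { decide := true }) [mul_add, add_mul, mul_sub, sub_mul, smul_mul_assoc,
    mul_smul_comm, smul_smul, smul_sub, smul_add, mul_assoc, Complex.I_mul_I, sub_eq_add_neg,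
    neg_smul, smul_neg]
  module

lemma gpair2 (x : Lam) : g 4 * (g 5 * x) = (-(2:ℂ) * Complex.I) • (dx 4 * (dx 5 * x)) := by
  have h0 : g 4 = dx 4 + Complex.I • dx 5 := by rw [← dz2]; rfl
  have h1 : g 5 = dx 4 - Complex.I • dx 5 := by rw [← dzb2]; rfl
  rw [h0, h1]
  simp (config := { decide := true }) [mul_add, add_mul, mul_sub, sub_mul, smul_mul_assoc,
    mul_smul_comm, smul_smul, smul_sub, smul_add, mul_assoc, Complex.I_mul_I, sub_eq_add_neg,
    neg_smul, smul_neg]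
  module

lemma gpair3 : g 6 * g 7 = (-(2:ℂ) * Complex.I) • (dx 6 * dx 7) := by
  have h0 : g 6 = dx 6 + Complex.I • dx 7 := by rw [← dz3]; rfl
  have h1 : g 7 = dx 6 - Complex.I • dx 7 := by rw [← dzb3]; rfl
  rw [h0, h1]
  simp (config := { decide := true }) [mul_add, add_mul, mul_sub, sub_mul, smul_mul_assoc,
    mul_smul_comm, smul_smul, smul_sub, smul_add, mul_assoc, Complex.I_mul_I, sub_eq_add_neg,
    neg_smul, smul_neg]
  module

@[simp] lemma g_oct :
    g 0 * (g 1 * (g 2 * (g 3 * (g 4 * (g 5 * (g 6 * g 7)))))) = (16:ℂ) • vol := by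
  rw [gpair3, mul_smul_comm, mul_smul_comm, gpair2, smul_smul, mul_smul_comm, mul_smul_comm,
    gpair1, smul_smul, mul_smul_comm, mul_smul_comm, gpair0, smul_smul]
  rw [show vol = dx 0 * (dx 1 * (dx 2 * (dx 3 * (dx 4 * (dx 5 * (dx 6 * dx 7)))))) by
    simp [vol, mul_assoc]]
  congr 1
  have h4 : Complex.I ^ 4 = 1 := by
    rw [show (4:ℕ) = 2*2 from rfl, pow_mul, Complex.I_sq]; norm_num
  linear_combination (16:ℂ) * h4


set_option maxHeartbeats 4000000 in
lemma L3 (a : Fin 4 → Fin 4 → ℂ) :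
    (∑ i : Fin 4, ∑ j : Fin 4, a i j • (dz i * dzbar j)) *
      (∑ i : Fin 4, ∑ j : Fin 4, a i j • (dz i * dzbar j)) * (omegaK * omegaK) =
    ((-16 : ℂ) * ((a 0 0 * a 1 1 - a 0 1 * a 1 0) + (a 0 0 * a 2 2 - a 0 2 * a 2 0)
      + (a 0 0 * a 3 3 - a 0 3 * a 3 0) + (a 1 1 * a 2 2 - a 1 2 * a 2 1)
      + (a 1 1 * a 3 3 - a 1 3 * a 3 1) + (a 2 2 * a 3 3 - a 2 3 * a 3 2))) • vol := by
  rw [mul_assoc]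
  simp only [omegaK, Fin.sum_univ_four, dz0, dz1, dz2, dz3, dzb0, dzb1, dzb2, dzb3]
  simp (config := { decide := true }) [mul_add, add_mul, smul_mul_assoc, mul_smul_comm,
    smul_smul, smul_add, mul_assoc, neg_mul, mul_neg, smul_neg, neg_smul, neg_neg]
  match_scalars
  all_goals (ring_nf; try simp only [Complex.I_sq]; try ring)

set_option maxHeartbeats 4000000 in
lemma L1 : omegaK * omegaK * cform * cformbar = (16 : ℂ) • vol := by
  rw [mul_assoc, mul_assoc]
  simp only [omegaK, cform, cformbar, Fin.sum_univ_four, dz0, dz1, dz2, dz3, dzb0, dzb1, dzb2, dzb3]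
  simp (config := { decide := true }) [mul_add, add_mul, smul_mul_assoc, mul_smul_comm,
    smul_smul, smul_add, mul_assoc, neg_mul, mul_neg, smul_neg, neg_smul, neg_neg]
  match_scalars
  all_goals (ring_nf; try simp only [Complex.I_sq]; try ring)

set_option maxHeartbeats 4000000 in
lemma L2 (a : Fin 4 → Fin 4 → ℂ) :
    (∑ i : Fin 4, ∑ j : Fin 4, a i j • (dz i * dzbar j)) *
      (∑ i : Fin 4, ∑ j : Fin 4, a i j • (dz i * dzbar j)) * cform * cformbar =
    ((-32 : ℂ) * ((a 0 0 * a 1 1 - a 0 1 * a 1 0) + (a 2 2 * a 3 3 - a 2 3 * a 3 2)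
      - (a 2 1 * a 3 0 - a 2 0 * a 3 1) - (a 0 3 * a 1 2 - a 0 2 * a 1 3))) • vol := by
  rw [mul_assoc, mul_assoc]
  simp only [cform, cformbar, Fin.sum_univ_four, dz0, dz1, dz2, dz3, dzb0, dzb1, dzb2, dzb3]
  simp (config := { decide := true }) [mul_add, add_mul, smul_mul_assoc, mul_smul_comm,
    smul_smul, smul_add, mul_assoc, neg_mul, mul_neg, smul_neg, neg_smul, neg_neg]
  match_scalars
  all_goals (ring_nf; try simp only [Complex.I_sq]; try ring)

set_option maxHeartbeats 1000000

theorem bogomolov_type_inequality_for_neg_alpha_sq (a : Fin 4 → Fin 4 → ℂ)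
    (hreal : ∀ i j, a j i = -(starRingEnd ℂ) (a i j))
    (hprim : ∑ i : Fin 4, a i i = 0) (k : ℝ)
    (hk : -((∑ i : Fin 4, ∑ j : Fin 4, a i j • (dz i * dzbar j)) *
          (∑ i : Fin 4, ∑ j : Fin 4, a i j • (dz i * dzbar j))) * (omegaK * omegaK) =
        ((24 * k : ℝ) : ℂ) • vol) :
    ∃ r : ℝ, r ≤ 0 ∧
      (-((∑ i : Fin 4, ∑ j : Fin 4, a i j • (dz i * dzbar j)) *
            (∑ i : Fin 4, ∑ j : Fin 4, a i j • (dz i * dzbar j))) -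
          ((3 * k : ℝ) : ℂ) • (omegaK * omegaK)) * cform * cformbar = (r : ℂ) • vol := by
  classical
  refine ⟨16 * (-2 * ((a 0 0).im + (a 1 1).im)^2
      - 2 * (‖a 0 2‖^2 + ‖a 0 3‖^2
             + ‖a 1 2‖^2 + ‖a 1 3‖^2)
      + 4 * (a 0 2 * a 1 3 - a 0 3 * a 1 2).re), ?_, ?_⟩
  · -- r ≤ 0
    have expand : 16 * (-2 * ((a 0 0).im + (a 1 1).im)^2
      - 2 * (‖a 0 2‖^2 + ‖a 0 3‖^2
             + ‖a 1 2‖^2 + ‖a 1 3‖^2)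
      + 4 * (a 0 2 * a 1 3 - a 0 3 * a 1 2).re) = 16 * (-2 * ((a 0 0).im + (a 1 1).im)^2
      - 2 * (((a 0 2).re^2 + (a 0 2).im^2) + ((a 0 3).re^2 + (a 0 3).im^2)
             + ((a 1 2).re^2 + (a 1 2).im^2) + ((a 1 3).re^2 + (a 1 3).im^2))
      + 4 * (((a 0 2).re * (a 1 3).re - (a 0 2).im * (a 1 3).im)
             - ((a 0 3).re * (a 1 2).re - (a 0 3).im * (a 1 2).im))) := by
      simp only [Complex.sq_norm, Complex.normSq_apply, Complex.sub_re, Complex.mul_re]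
      ring
    rw [expand]
    nlinarith [sq_nonneg ((a 0 2).re - (a 1 3).re), sq_nonneg ((a 0 2).im + (a 1 3).im),
      sq_nonneg ((a 0 3).re + (a 1 2).re), sq_nonneg ((a 0 3).im - (a 1 2).im),
      sq_nonneg ((a 0 0).im + (a 1 1).im)]
  · -- the exterior algebra identity
    have h02 := hreal 0 2
    have h03 := hreal 0 3
    have h12 := hreal 1 2
    have h13 := hreal 1 3
    have h01 := hreal 0 1
    have h23 := hreal 2 3
    have h00 := hreal 0 0
    have h11 := hreal 1 1
    have h22 := hreal 2 2
    rw [Fin.sum_univ_four] at hprim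
    have e33 : a 3 3 = -(a 0 0) - a 1 1 - a 2 2 := by linear_combination hprim
    have e00 : (a 0 0).re = 0 := by
      have := congrArg Complex.re h00; simp at this; linarith
    have e11 : (a 1 1).re = 0 := by
      have := congrArg Complex.re h11; simp at this; linarith
    have e22 : (a 2 2).re = 0 := by
      have := congrArg Complex.re h22; simp at this; linarith
    have key : ((16 * (-2 * ((a 0 0).im + (a 1 1).im)^2
        - 2 * (‖a 0 2‖^2 + ‖a 0 3‖^2
               + ‖a 1 2‖^2 + ‖a 1 3‖^2)
        + 4 * (a 0 2 * a 1 3 - a 0 3 * a 1 2).re) : ℝ) : ℂ)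
        = -((-32 : ℂ) * ((a 0 0 * a 1 1 - a 0 1 * a 1 0) + (a 2 2 * a 3 3 - a 2 3 * a 3 2)
            - (a 2 1 * a 3 0 - a 2 0 * a 3 1) - (a 0 3 * a 1 2 - a 0 2 * a 1 3)))
          - 32 * ((a 0 0 * a 1 1 - a 0 1 * a 1 0) + (a 0 0 * a 2 2 - a 0 2 * a 2 0)
            + (a 0 0 * a 3 3 - a 0 3 * a 3 0) + (a 1 1 * a 2 2 - a 1 2 * a 2 1)
            + (a 1 1 * a 3 3 - a 1 3 * a 3 1) + (a 2 2 * a 3 3 - a 2 3 * a 3 2)) := by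
      simp only [h02, h03, h12, h13, h01, h23, e33]
      have c1 : ((a 0 0).im : ℂ) = -Complex.I * a 0 0 := by
        apply Complex.ext <;> simp [e00]
      have c2 : ((a 1 1).im : ℂ) = -Complex.I * a 1 1 := by
        apply Complex.ext <;> simp [e11]
      have habs : ∀ z : ℂ, ((‖z‖ : ℂ))^2 = z * (starRingEnd ℂ) z := by
        intro z
        rw [← Complex.ofReal_pow, Complex.sq_norm, Complex.mul_conj]
      have hre : ∀ z : ℂ, ((z.re : ℝ) : ℂ) = (z + (starRingEnd ℂ) z)/2 := by
        intro z; apply Complex.ext <;> simp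
      push_cast
      rw [c1, c2, habs, habs, habs, habs, hre]
      simp only [map_sub, map_mul]
      linear_combination ((-32 : ℂ)*(a 0 0 + a 1 1)^2) * Complex.I_sq
    have hS : ((24 * k : ℝ) : ℂ) • vol =
        ((16:ℂ) * ((a 0 0 * a 1 1 - a 0 1 * a 1 0) + (a 0 0 * a 2 2 - a 0 2 * a 2 0)
          + (a 0 0 * a 3 3 - a 0 3 * a 3 0) + (a 1 1 * a 2 2 - a 1 2 * a 2 1)
          + (a 1 1 * a 3 3 - a 1 3 * a 3 1) + (a 2 2 * a 3 3 - a 2 3 * a 3 2))) • vol := by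
      rw [← hk, neg_mul, L3 a, ← neg_smul]
      congr 1
      ring
    rw [sub_mul, sub_mul, smul_mul_assoc, smul_mul_assoc, neg_mul, neg_mul, L2 a, L1,
      smul_smul]
    have h2 : ((3 * k : ℝ) : ℂ) * 16 = 2 * ((24 * k : ℝ) : ℂ) := by push_cast; ring
    rw [h2, show ((2:ℂ) * ((24 * k : ℝ) : ℂ)) • vol
        = (2:ℂ) • (((24 * k : ℝ) : ℂ) • vol) from mul_smul _ _ _, hS, key]
    module


end
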